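/- Let A : H1 → H2 be nonzero bounded linear with closed range, V : H2 → H2 ρ-SQNE with R(A) ∩ Fix V ≠ ∅ nonempty and closed convex, and 1 ≤ σ ≤ τ. Then for all x ∈ H1: (1/‖A‖) d(Ax, R(A) ∩ Fix V) ≤ d(x, Fix L_σ{V}) ≤ (1/|A|) d(Ax, R(A) ∩ Fix V). -/

import Mathlib

open scoped Classical

/-- `U` is `ρ`-strongly quasi-nonexpansive. -/
def IsSQNE {H : Type*} [NormedAddCommGroup H] [InnerProductSpace ℝ H]
    (U : H → H) (ρ : ℝ) : Prop :=
  ∀ x : H, ∀ z ∈ Function.fixedPoints U, ‖U x - z‖ ^ 2 ≤ ‖x - z‖ ^ 2 - ρ * ‖U x - x‖ ^ 2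

variable {H1 H2 : Type*} [NormedAddCommGroup H1] [InnerProductSpace ℝ H1]
  [NormedAddCommGroup H2] [InnerProductSpace ℝ H2] [CompleteSpace H1] [CompleteSpace H2]

/-- The extrapolated Landweber operator corresponding to `V` and the
extrapolation functional `σ`. -/
noncomputable def Landweber (A : H1 →L[ℝ] H2) (σ : H1 → ℝ) (V : H2 → H2) : H1 → H1 :=
  fun x => x + (σ x / ‖A‖ ^ 2) • (ContinuousLinearMap.adjoint A) (V (A x) - A x)

/-- The maximal extrapolation functional `τ`. -/
noncomputable def tauFun (A : H1 →L[ℝ] H2) (V : H2 → H2) : H1 → ℝ :=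
  fun x =>
    if V (A x) ≠ A x then
      (‖A‖ * ‖V (A x) - A x‖ / ‖(ContinuousLinearMap.adjoint A) (V (A x) - A x)‖) ^ 2
    else 1

/-- `|A|`: the infimum of `‖A x‖` over unit vectors in `(ker A)ᗮ`. -/
noncomputable def minNorm (A : H1 →L[ℝ] H2) : ℝ :=
  sInf ((fun x => ‖A x‖) '' {x : H1 | x ∈ (LinearMap.ker (A : H1 →ₗ[ℝ] H2))ᗮ ∧ ‖x‖ = 1})

private lemma le_infDist_aux {α : Type*} [PseudoMetricSpace α] {s : Set α} (hs : s.Nonempty)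
    {x : α} {b : ℝ} (h : ∀ y ∈ s, b ≤ dist x y) : b ≤ Metric.infDist x s := by
  rw [Metric.infDist_eq_iInf]
  haveI := hs.to_subtype
  exact le_ciInf fun y => h y y.2

private lemma minNorm_mul_le (A : H1 →L[ℝ] H2) {u : H1} (hu : u ∈ (LinearMap.ker (A : H1 →ₗ[ℝ] H2))ᗮ) :
    minNorm A * ‖u‖ ≤ ‖A u‖ := by
  rcases eq_or_ne u 0 with rfl | hu0
  · simp
  · have hnu : (0:ℝ) < ‖u‖ := norm_pos_iff.mpr hu0
    have hmem : (fun x => ‖A x‖) ((‖u‖:ℝ)⁻¹ • u) ∈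
        ((fun x => ‖A x‖) '' {x : H1 | x ∈ (LinearMap.ker (A : H1 →ₗ[ℝ] H2))ᗮ ∧ ‖x‖ = 1}) := by
      refine Set.mem_image_of_mem _ ⟨Submodule.smul_mem _ _ hu, ?_⟩
      rw [norm_smul, norm_inv, norm_norm, inv_mul_cancel₀ hnu.ne']
    have hbdd : BddBelow ((fun x => ‖A x‖) '' {x : H1 | x ∈ (LinearMap.ker (A : H1 →ₗ[ℝ] H2))ᗮ ∧ ‖x‖ = 1}) := by
      refine ⟨0, ?_⟩
      rintro y ⟨x, -, rfl⟩
      exact norm_nonneg _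
    have h1 : minNorm A ≤ ‖A ((‖u‖:ℝ)⁻¹ • u)‖ := by
      unfold minNorm
      exact csInf_le hbdd hmem
    have h2 : ‖A ((‖u‖:ℝ)⁻¹ • u)‖ = (‖u‖:ℝ)⁻¹ * ‖A u‖ := by
      rw [map_smul, norm_smul, norm_inv, norm_norm]
    rw [h2] at h1
    calc minNorm A * ‖u‖ ≤ ((‖u‖:ℝ)⁻¹ * ‖A u‖) * ‖u‖ :=
          mul_le_mul_of_nonneg_right h1 hnu.le
      _ = ‖A u‖ := by field_simp

private lemma minNorm_pos (A : H1 →L[ℝ] H2) (hA : A ≠ 0) (hR : IsClosed (Set.range A)) :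
    0 < minNorm A := by
  classical
  set K := LinearMap.ker (A : H1 →ₗ[ℝ] H2) with hK
  haveI hcompl_range : CompleteSpace (LinearMap.range (A : H1 →ₗ[ℝ] H2)) := by
    have h : ((LinearMap.range (A : H1 →ₗ[ℝ] H2) : Submodule ℝ H2) : Set H2) = Set.range A :=
      LinearMap.coe_range (A : H1 →ₗ[ℝ] H2)
    have : IsClosed ((LinearMap.range (A : H1 →ₗ[ℝ] H2) : Submodule ℝ H2) : Set H2) := by rw [h]; exact hR
    exact this.completeSpace_coe
  haveI hcomplK : CompleteSpace K := (ContinuousLinearMap.isClosed_ker A).completeSpace_coe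
  set B : Kᗮ →L[ℝ] (LinearMap.range (A : H1 →ₗ[ℝ] H2)) :=
    ContinuousLinearMap.codRestrict (A.comp (Submodule.subtypeL Kᗮ)) (LinearMap.range (A : H1 →ₗ[ℝ] H2))
      (fun x => LinearMap.mem_range_self _ _) with hB
  have hBval : ∀ u : Kᗮ, ((B u : H2)) = A u := fun u => rfl
  have hker : B.ker = ⊥ := by
    rw [Submodule.eq_bot_iff]
    intro u hu
    have h1 : A (u : H1) = 0 := by
      have h0 : B u = 0 := hu
      have := congrArg (Subtype.val) h0
      simpa [hBval] using this
    have h2 : (u : H1) ∈ K := h1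
    have h4 : (u : H1) = 0 := by
      have := Submodule.inner_right_of_mem_orthogonal h2 u.2
      rwa [inner_self_eq_zero] at this
    exact Subtype.ext h4
  have hrange : B.range = ⊤ := by
    rw [LinearMap.range_eq_top]
    rintro ⟨v, hv⟩
    obtain ⟨w, hw⟩ := hv
    refine ⟨⟨w - (Submodule.orthogonalProjectionOnto K w : H1),
      Submodule.sub_starProjection_mem_orthogonal (K := K) w⟩, ?_⟩
    apply Subtype.ext
    have hker' : A ((Submodule.orthogonalProjectionOnto K w : H1)) = 0 := (Submodule.orthogonalProjectionOnto K w).2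
    simp only [hBval, map_sub, hker', sub_zero]
    exact (hBval _).trans (by simp only [map_sub, hker', sub_zero]; exact hw)
  let e : Kᗮ ≃L[ℝ] (LinearMap.range (A : H1 →ₗ[ℝ] H2)) := ContinuousLinearEquiv.ofBijective B hker hrange
  set c : ℝ := ‖(e.symm : (LinearMap.range (A : H1 →ₗ[ℝ] H2)) →L[ℝ] Kᗮ)‖ with hc
  have hbound : ∀ x : H1, x ∈ (LinearMap.ker (A : H1 →ₗ[ℝ] H2))ᗮ → ‖x‖ = 1 → 1 ≤ c * ‖A x‖ := by
    intro x hx hx1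
    set x' : Kᗮ := ⟨x, hx⟩ with hx'
    have h1 : x' = e.symm (e x') := (e.symm_apply_apply x').symm
    have h2 : ‖x'‖ ≤ c * ‖e x'‖ := by
      conv_lhs => rw [h1]
      exact (e.symm : (LinearMap.range (A : H1 →ₗ[ℝ] H2)) →L[ℝ] Kᗮ).le_opNorm (e x')
    have h3 : ‖e x'‖ = ‖A x‖ := rfl
    have h4 : ‖x'‖ = (1:ℝ) := hx1
    rw [h4, h3] at h2
    exact h2
  obtain ⟨x0, hx0⟩ : ∃ x, A x ≠ 0 := by
    by_contra h
    push_neg at h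
    exact hA (ContinuousLinearMap.ext fun x => by simp [h x])
  set u0 : H1 := x0 - (Submodule.orthogonalProjectionOnto K x0 : H1) with hu0def
  have hu0 : A u0 = A x0 := by
    have hker' : A ((Submodule.orthogonalProjectionOnto K x0 : H1)) = 0 := (Submodule.orthogonalProjectionOnto K x0).2
    simp only [hu0def, map_sub, hker', sub_zero]
  have hu0mem : u0 ∈ Kᗮ := Submodule.sub_starProjection_mem_orthogonal (K := K) x0
  have hu0ne : u0 ≠ 0 := by
    intro h
    rw [h, map_zero] at hu0
    exact hx0 hu0.symm
  have hnu0 : (0:ℝ) < ‖u0‖ := norm_pos_iff.mpr hu0ne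
  set t0 : H1 := (‖u0‖:ℝ)⁻¹ • u0 with ht0
  have ht0mem : t0 ∈ Kᗮ := Submodule.smul_mem _ _ hu0mem
  have ht0norm : ‖t0‖ = 1 := by
    rw [ht0, norm_smul, norm_inv, norm_norm, inv_mul_cancel₀ hnu0.ne']
  have hcpos : 0 < c := by
    by_contra h
    push_neg at h
    have h1 := hbound t0 ht0mem ht0norm
    have : c * ‖A t0‖ ≤ 0 := mul_nonpos_of_nonpos_of_nonneg h (norm_nonneg _)
    linarith
  have hSne : ((fun x => ‖A x‖) '' {x : H1 | x ∈ (LinearMap.ker (A : H1 →ₗ[ℝ] H2))ᗮ ∧ ‖x‖ = 1}).Nonempty :=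
    ⟨‖A t0‖, Set.mem_image_of_mem _ ⟨ht0mem, ht0norm⟩⟩
  have hmain : c⁻¹ ≤ minNorm A := by
    unfold minNorm
    apply le_csInf hSne
    rintro y ⟨x, ⟨hx1, hx2⟩, rfl⟩
    have h5 := hbound x hx1 hx2
    rw [inv_le_iff_one_le_mul₀ hcpos]
    linarith
  linarith [inv_pos.mpr hcpos, hmain]

private lemma fix_landweber (A : H1 →L[ℝ] H2) (hA : A ≠ 0)
    (V : H2 → H2) (ρ : ℝ) (hρ : 0 ≤ ρ) (hV : IsSQNE V ρ)
    (hfix : (Set.range A ∩ Function.fixedPoints V).Nonempty)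
    (σ : H1 → ℝ) (hσ : ∀ x, 1 ≤ σ x ∧ σ x ≤ tauFun A V x) (x : H1) :
    x ∈ Function.fixedPoints (Landweber A σ V) ↔ V (A x) = A x := by
  have hApos : (0:ℝ) < ‖A‖ := norm_pos_iff.mpr hA
  have hc : σ x / ‖A‖ ^ 2 ≠ 0 := by
    have h1 := (hσ x).1
    positivity
  constructor
  · intro hx
    have hx' : x + (σ x / ‖A‖ ^ 2) • (ContinuousLinearMap.adjoint A) (V (A x) - A x) = x := hx
    have h0 : (σ x / ‖A‖ ^ 2) • (ContinuousLinearMap.adjoint A) (V (A x) - A x) = 0 := by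
      have := hx'
      rwa [add_eq_left] at this
    have hadj : (ContinuousLinearMap.adjoint A) (V (A x) - A x) = 0 := by
      rcases smul_eq_zero.mp h0 with h | h
      · exact absurd h hc
      · exact h
    obtain ⟨z, ⟨x0, hx0⟩, hz⟩ := hfix
    have hz' : V z = z := hz
    have hperp : inner ℝ (V (A x) - A x) (A x - z) = (0:ℝ) := by
      have h1 : inner ℝ ((ContinuousLinearMap.adjoint A) (V (A x) - A x)) (x - x0) = (0:ℝ) := by
        rw [hadj, inner_zero_left]
      rw [ContinuousLinearMap.adjoint_inner_left] at h1
      rw [map_sub, hx0] at h1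
      exact h1
    have hsqne := hV (A x) z hz
    have hexp : ‖V (A x) - z‖ ^ 2
        = ‖V (A x) - A x‖ ^ 2 + 2 * inner ℝ (V (A x) - A x) (A x - z) + ‖A x - z‖ ^ 2 := by
      have : V (A x) - z = (V (A x) - A x) + (A x - z) := by abel
      rw [this, norm_add_sq_real]
    rw [hexp, hperp] at hsqne
    have hw : ‖V (A x) - A x‖ ^ 2 ≤ 0 := by nlinarith
    have : ‖V (A x) - A x‖ = 0 := by nlinarith [norm_nonneg (V (A x) - A x)]
    have := norm_eq_zero.mp this
    exact sub_eq_zero.mp this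
  · intro hx
    show Landweber A σ V x = x
    unfold Landweber
    rw [hx, sub_self, map_zero, smul_zero, add_zero]

theorem stmt16 (A : H1 →L[ℝ] H2) (hA : A ≠ 0) (hR : IsClosed (Set.range A))
    (V : H2 → H2) (ρ : ℝ) (hρ : 0 ≤ ρ) (hV : IsSQNE V ρ)
    (hfix : (Set.range A ∩ Function.fixedPoints V).Nonempty)
    (hcl : IsClosed (Set.range A ∩ Function.fixedPoints V))
    (hcv : Convex ℝ (Set.range A ∩ Function.fixedPoints V))
    (σ : H1 → ℝ) (hσ : ∀ x, 1 ≤ σ x ∧ σ x ≤ tauFun A V x) :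
    ∀ x : H1,
      (1 / ‖A‖) * Metric.infDist (A x) (Set.range A ∩ Function.fixedPoints V) ≤
        Metric.infDist x (Function.fixedPoints (Landweber A σ V)) ∧
      Metric.infDist x (Function.fixedPoints (Landweber A σ V)) ≤
        (1 / minNorm A) * Metric.infDist (A x) (Set.range A ∩ Function.fixedPoints V) := by
  intro x
  have hApos : (0:ℝ) < ‖A‖ := norm_pos_iff.mpr hA
  have hmpos : 0 < minNorm A := minNorm_pos A hA hR
  have hfixiff := fix_landweber A hA V ρ hρ hV hfix σ hσ
  obtain ⟨z0, ⟨w0, hw0⟩, hz0⟩ := hfix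
  have hz0' : V z0 = z0 := hz0
  have hFne : (Function.fixedPoints (Landweber A σ V)).Nonempty :=
    ⟨w0, (hfixiff w0).mpr (by rw [hw0]; exact hz0')⟩
  have hSne : (Set.range A ∩ Function.fixedPoints V).Nonempty := ⟨z0, ⟨w0, hw0⟩, hz0⟩
  constructor
  · apply le_infDist_aux hFne
    intro y hy
    have hAy : A y ∈ Set.range A ∩ Function.fixedPoints V :=
      ⟨⟨y, rfl⟩, show V (A y) = A y from (hfixiff y).mp hy⟩
    have h1 : Metric.infDist (A x) (Set.range A ∩ Function.fixedPoints V) ≤ dist (A x) (A y) :=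
      Metric.infDist_le_dist_of_mem hAy
    have h2 : dist (A x) (A y) ≤ ‖A‖ * dist x y := by
      rw [dist_eq_norm, dist_eq_norm, ← map_sub]
      exact A.le_opNorm _
    rw [one_div, inv_mul_le_iff₀ hApos]
    linarith
  · have key : minNorm A * Metric.infDist x (Function.fixedPoints (Landweber A σ V)) ≤
        Metric.infDist (A x) (Set.range A ∩ Function.fixedPoints V) := by
      apply le_infDist_aux hSne
      rintro z ⟨⟨w, hw⟩, hzfix⟩
      have hzfix' : V z = z := hzfix
      haveI : CompleteSpace (LinearMap.ker (A : H1 →ₗ[ℝ] H2)) :=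
        (ContinuousLinearMap.isClosed_ker A).completeSpace_coe
      set v : H1 := w - x with hv
      set u : H1 := v - (Submodule.orthogonalProjectionOnto (LinearMap.ker (A : H1 →ₗ[ℝ] H2)) v : H1) with hu
      have humem : u ∈ (LinearMap.ker (A : H1 →ₗ[ℝ] H2))ᗮ := Submodule.sub_starProjection_mem_orthogonal (K := LinearMap.ker (A : H1 →ₗ[ℝ] H2)) v
      have hAu : A u = z - A x := by
        have hker' : A ((Submodule.orthogonalProjectionOnto (LinearMap.ker (A : H1 →ₗ[ℝ] H2)) v : H1)) = 0 :=
          (Submodule.orthogonalProjectionOnto (LinearMap.ker (A : H1 →ₗ[ℝ] H2)) v).2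
        rw [hu, map_sub, hker', sub_zero, hv, map_sub, hw]
      have hAxu : A (x + u) = z := by
        rw [map_add, hAu]; abel
      have hy : x + u ∈ Function.fixedPoints (Landweber A σ V) :=
        (hfixiff _).mpr (by rw [hAxu]; exact hzfix')
      have h1 : Metric.infDist x (Function.fixedPoints (Landweber A σ V)) ≤ ‖u‖ := by
        have := Metric.infDist_le_dist_of_mem (x := x) hy
        rwa [dist_self_add_right] at this
      have h2 : minNorm A * ‖u‖ ≤ ‖A u‖ := minNorm_mul_le A humem
      have h3 : ‖A u‖ = dist (A x) z := by
        rw [hAu, dist_eq_norm, norm_sub_rev]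
      calc minNorm A * Metric.infDist x (Function.fixedPoints (Landweber A σ V))
          ≤ minNorm A * ‖u‖ := mul_le_mul_of_nonneg_left h1 hmpos.le
        _ ≤ ‖A u‖ := h2
        _ = dist (A x) z := h3
    rw [one_div, le_inv_mul_iff₀ hmpos]
    exact key
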